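/- Worst-case covering lemma: for every clique set cl, sharing set sh, and finite set G of variables, the star union of the part of ↓cl ∪ sh relevant to G is covered by the pair (cl_G* ∪ (cl_G* ⊎ sh_G*), sh_G*); that is, ((↓cl ∪ sh)_G)* ⊆ ↓(cl_G* ∪ (cl_G* ⊎ sh_G*)) ∪ (sh_G)*. -/
import Mathlib


variable {V : Type*} [DecidableEq V]

/-- `℘⁰(C)`: the set of nonempty subsets of a finite set `C`. -/
def pow0 (C : Finset V) : Set (Finset V) := {u | u ⊆ C ∧ u ≠ ∅}

/-- Concretization of a clique set: `↓cl = ⋃_{C ∈ cl} ℘⁰(C)`. -/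
def conc (cl : Set (Finset V)) : Set (Finset V) := ⋃ C ∈ cl, pow0 C

/-- Binary union: `s₁ ⊎ s₂ = {a ∪ b : a ∈ s₁, b ∈ s₂}`. -/
def bin (s₁ s₂ : Set (Finset V)) : Set (Finset V) :=
  {u | ∃ a ∈ s₁, ∃ b ∈ s₂, u = a ∪ b}

/-- Star union: all unions `⋃ T` over finite nonempty subfamilies `T ⊆ s`. -/
def starU (s : Set (Finset V)) : Set (Finset V) :=
  {u | ∃ T : Finset (Finset V), T.Nonempty ∧ ↑T ⊆ s ∧ u = T.sup id}

/-- `s_G`: the part of `s` relevant to `G` (groups intersecting `G`). -/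
def relG (G : Finset V) (s : Set (Finset V)) : Set (Finset V) :=
  {u ∈ s | u ∩ G ≠ ∅}

/-- `rel̄(S, cl) = {C \ S : C ∈ cl} \ {∅}`. -/
def relbar (S : Finset V) (cl : Set (Finset V)) : Set (Finset V) :=
  {d | (∃ C ∈ cl, d = C \ S) ∧ d ≠ ∅}

/-- `project(G, s) = {u ∩ G : u ∈ s} \ {∅}`. -/
def sproject (G : Finset V) (s : Set (Finset V)) : Set (Finset V) :=
  {d | (∃ u ∈ s, d = u ∩ G) ∧ d ≠ ∅}

/-- Abstract unification of the Sharing domain for `x = t`, `T` the variables of `t`. -/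
def amgu (x : V) (T : Finset V) (s : Set (Finset V)) : Set (Finset V) :=
  (s \ relG ({x} ∪ T) s) ∪ bin (starU (relG {x} s)) (starU (relG T s))

/-- The `extend` function of the Sharing domain. -/
def extendSh (Call : Set (Finset V)) (G : Finset V) (Prime : Set (Finset V)) :
    Set (Finset V) :=
  {u ∈ Call | u ∩ G = ∅} ∪ {u ∈ starU (relG G Call) | u ∩ G ∈ Prime}

/-- Union of all groups of `s` containing `x`, as a set of variables. -/
def occSet (s : Set (Finset V)) (x : V) : Set V :=
  ⋃ u ∈ {u ∈ s | x ∈ u}, (↑u : Set V)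

/-- Worst-case covering:
    ((↓cl ∪ sh)_G)* ⊆ ↓(cl_G* ∪ (cl_G* ⊎ sh_G*)) ∪ (sh_G)*. -/
theorem worst_case_cover (cl sh : Set (Finset V)) (G : Finset V) :
    starU (relG G (conc cl ∪ sh)) ⊆
      conc (starU (relG G cl) ∪ bin (starU (relG G cl)) (starU (relG G sh)))
        ∪ starU (relG G sh) := by
  classical
  rintro u ⟨T, hTne, hTsub, rfl⟩
  set Tc := T.filter (fun t => t ∈ conc cl) with hTcdef
  set Ts := T.filter (fun t => t ∉ conc cl) with hTsdef
  have hpart : Tc ∪ Ts = T := Finset.filter_union_filter_not_eq _ T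
  have hsupsplit : T.sup id = Tc.sup id ∪ Ts.sup id := by
    rw [← hpart, Finset.sup_union]; rfl
  -- u is nonempty
  have hune : T.sup id ≠ ∅ := by
    obtain ⟨t, ht⟩ := hTne
    obtain ⟨-, hG⟩ := hTsub ht
    intro h
    apply hG
    have : t ⊆ T.sup id := Finset.le_sup (f := id) ht
    rw [h] at this
    simp [Finset.subset_empty.mp this]
  -- every element of Ts lies in relG G sh
  have hTsSub : (↑Ts : Set (Finset V)) ⊆ relG G sh := by
    intro t ht
    rw [Finset.mem_coe, hTsdef, Finset.mem_filter] at ht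
    obtain ⟨htT, htnc⟩ := ht
    obtain ⟨hmem, hG⟩ := hTsub htT
    cases hmem with
    | inl h => exact absurd h htnc
    | inr h => exact ⟨h, hG⟩
  by_cases hTcne : Tc.Nonempty
  · -- choose a clique for each element of Tc
    have hchoice : ∀ t ∈ Tc, ∃ C ∈ cl, t ⊆ C := by
      intro t ht
      rw [hTcdef, Finset.mem_filter] at ht
      obtain ⟨-, hc⟩ := ht
      simp only [conc, Set.mem_iUnion] at hc
      obtain ⟨C, hC, hsub, -⟩ := hc
      exact ⟨C, hC, hsub⟩
    set f : Finset V → Finset V := fun t =>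
      if h : ∃ C ∈ cl, t ⊆ C then h.choose else ∅ with hf
    have hfspec : ∀ t ∈ Tc, f t ∈ cl ∧ t ⊆ f t := by
      intro t ht
      have h := hchoice t ht
      simp only [hf, dif_pos h]
      exact ⟨h.choose_spec.1, h.choose_spec.2⟩
    set T' := Tc.image f with hT'
    set D := T'.sup id with hD
    have hT'ne : T'.Nonempty := hTcne.image f
    have hT'sub : (↑T' : Set (Finset V)) ⊆ relG G cl := by
      intro t' ht'
      rw [Finset.mem_coe, hT', Finset.mem_image] at ht'
      obtain ⟨t, htTc, rfl⟩ := ht'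
      obtain ⟨hcl, hsub⟩ := hfspec t htTc
      refine ⟨hcl, ?_⟩
      have htT : t ∈ T := Finset.mem_of_mem_filter t htTc
      obtain ⟨-, hG⟩ := hTsub htT
      intro h
      apply hG
      have : t ∩ G ⊆ f t ∩ G := Finset.inter_subset_inter hsub le_rfl
      rw [h] at this
      exact Finset.subset_empty.mp this
    have hDstar : D ∈ starU (relG G cl) := ⟨T', hT'ne, hT'sub, rfl⟩
    have hTcD : Tc.sup id ⊆ D := by
      show Tc.sup id ≤ D
      apply Finset.sup_le
      intro t ht
      exact (hfspec t ht).2.trans (Finset.le_sup (f := id) (Finset.mem_image_of_mem f ht))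
    by_cases hTsne : Ts.Nonempty
    · -- both parts nonempty: use bin
      left
      have hbstar : Ts.sup id ∈ starU (relG G sh) := ⟨Ts, hTsne, hTsSub, rfl⟩
      have hbin : D ∪ Ts.sup id ∈
          starU (relG G cl) ∪ bin (starU (relG G cl)) (starU (relG G sh)) :=
        Or.inr ⟨D, hDstar, Ts.sup id, hbstar, rfl⟩
      refine Set.mem_biUnion hbin ?_
      refine ⟨?_, hune⟩
      rw [hsupsplit]
      exact Finset.union_subset_union hTcD le_rfl
    · -- Ts empty: u ⊆ D
      left
      have hTsempty : Ts = ∅ := Finset.not_nonempty_iff_eq_empty.mp hTsne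
      refine Set.mem_biUnion (Or.inl hDstar) ?_
      refine ⟨?_, hune⟩
      rw [hsupsplit, hTsempty]
      simpa using hTcD
  · -- Tc empty: everything comes from sh
    right
    have hTcempty : Tc = ∅ := Finset.not_nonempty_iff_eq_empty.mp hTcne
    have hTeq : T = Ts := by rw [← hpart, hTcempty, Finset.empty_union]
    exact ⟨Ts, hTeq ▸ hTne, hTsSub, by rw [hTeq]⟩
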